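/- For n ≥ 2, k ≥ 0, m ≥ 0 and a fixed index j ∈ {1,...,n}, one has F(n,k,P,m) = Σ_{i=1}^{p_j} C(p_j, i) · F(n-1, k-i+1, P \ {p_j}, m), where P \ {p_j} is the multiset of block sizes with the j-th block removed (terms with k-i+1 < 0 are zero). -/

import Mathlib

/-- The ground set: `n` main blocks, the `i`-th of size `p i`, plus an
additional block of size `m`. -/
abbrev InsetGround (n : ℕ) (p : Fin n → ℕ) (m : ℕ) : Type :=
  (Σ i : Fin n, Fin (p i)) ⊕ Fin m

/-- `F n p m k` is the number of `(n+k)`-subsets of the ground set that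
intersect every main block (the "(n+k)-insets"). -/
def F (n : ℕ) (p : Fin n → ℕ) (m k : ℕ) : ℕ :=
  ((Finset.univ : Finset (Finset (InsetGround n p m))).filter
    (fun U => U.card = n + k ∧
      ∀ i : Fin n, ∃ x : Σ j : Fin n, Fin (p j), x.1 = i ∧ Sum.inl x ∈ U)).card

/-- The inset-counting function with an integer parameter `k`, equal to `0`
when `k < 0` (the paper's convention `F(n,k,P,m) = 0` for `k < 0`). -/
def Fz (n : ℕ) (p : Fin n → ℕ) (m : ℕ) (k : ℤ) : ℕ :=
  if 0 ≤ k then F n p m k.toNat else 0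

namespace InsetAux

variable {n m : ℕ} (p : Fin (n + 1) → ℕ) (m) (j : Fin (n + 1))

def inlj (a : Fin (p j)) : InsetGround (n + 1) p m := Sum.inl ⟨j, a⟩

def toBig : InsetGround n (j.removeNth p) m → InsetGround (n + 1) p m
  | Sum.inl ⟨i, b⟩ => Sum.inl ⟨j.succAbove i, b⟩
  | Sum.inr c => Sum.inr c

variable {p m j}

lemma inlj_injective : Function.Injective (inlj p m j) := by
  intro a b h
  simpa [inlj] using h

lemma toBig_injective : Function.Injective (toBig p m j) := by
  rintro (⟨i₁, b₁⟩ | c₁) (⟨i₂, b₂⟩ | c₂) h <;> simp [toBig] at h ⊢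
  · obtain ⟨h1, h2⟩ := Sigma.mk.inj_iff.1 h
    have : i₁ = i₂ := Fin.succAbove_right_injective h1
    subst this
    exact ⟨rfl, h2⟩
  · exact h

lemma inlj_ne_toBig (a : Fin (p j)) (y : InsetGround n (j.removeNth p) m) :
    inlj p m j a ≠ toBig p m j y := by
  rcases y with ⟨i, b⟩ | c <;> simp [inlj, toBig]
  intro h
  exact (Fin.succAbove_ne j i (congrArg Sigma.fst h.symm)).elim

lemma total (x : InsetGround (n + 1) p m) :
    (∃ a, x = inlj p m j a) ∨ ∃ y, x = toBig p m j y := by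
  rcases x with ⟨i, b⟩ | c
  · by_cases h : i = j
    · subst h; exact Or.inl ⟨b, rfl⟩
    · obtain ⟨i', rfl⟩ := Fin.exists_succAbove_eq h
      exact Or.inr ⟨Sum.inl ⟨i', b⟩, rfl⟩
  · exact Or.inr ⟨Sum.inr c, rfl⟩

variable (p m j) in
def Spart (U : Finset (InsetGround (n + 1) p m)) : Finset (Fin (p j)) :=
  Finset.univ.filter (fun a => inlj p m j a ∈ U)

variable (p m j) in
def Vpart (U : Finset (InsetGround (n + 1) p m)) :
    Finset (InsetGround n (j.removeNth p) m) :=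
  Finset.univ.filter (fun y => toBig p m j y ∈ U)

lemma decomp (U : Finset (InsetGround (n + 1) p m)) :
    U = (Spart p m j U).image (inlj p m j) ∪ (Vpart p m j U).image (toBig p m j) := by
  ext x
  simp only [Finset.mem_union, Finset.mem_image, Spart, Vpart, Finset.mem_filter,
    Finset.mem_univ, true_and]
  constructor
  · intro hx
    rcases total (j := j) x with ⟨a, rfl⟩ | ⟨y, rfl⟩
    · exact Or.inl ⟨a, hx, rfl⟩
    · exact Or.inr ⟨y, hx, rfl⟩
  · rintro (⟨a, ha, rfl⟩ | ⟨y, hy, rfl⟩) <;> assumption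

lemma card_decomp (U : Finset (InsetGround (n + 1) p m)) :
    U.card = (Spart p m j U).card + (Vpart p m j U).card := by
  have hdisj : Disjoint ((Spart p m j U).image (inlj p m j))
      ((Vpart p m j U).image (toBig p m j)) := by
    rw [Finset.disjoint_left]
    rintro x hx hx'
    simp only [Finset.mem_image] at hx hx'
    obtain ⟨a, _, rfl⟩ := hx
    obtain ⟨y, _, h⟩ := hx'
    exact inlj_ne_toBig a y h.symm
  conv_lhs => rw [decomp (j := j) U]
  rw [Finset.card_union_of_disjoint hdisj, Finset.card_image_of_injective _ inlj_injective,
    Finset.card_image_of_injective _ toBig_injective]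

end InsetAux

open InsetAux in
theorem stmt_10 (n : ℕ) (hn : 1 ≤ n) (k m : ℕ) (p : Fin (n + 1) → ℕ)
    (hp : ∀ i, 1 ≤ p i) (j : Fin (n + 1)) :
    F (n + 1) p m k =
      ∑ i ∈ Finset.Icc 1 (p j),
        (p j).choose i * Fz n (j.removeNth p) m ((k : ℤ) - i + 1) := by
  classical
  rw [F]
  set T := ((Finset.univ : Finset (Finset (InsetGround (n+1) p m))).filter
    (fun U => U.card = (n+1) + k ∧
      ∀ i : Fin (n+1), ∃ x : Σ j' : Fin (n+1), Fin (p j'), x.1 = i ∧ Sum.inl x ∈ U)) with hT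
  -- every member's Spart has card in Icc 1 (p j)
  have hfiber : ∀ U ∈ T, (Spart p m j U).card ∈ Finset.Icc 1 (p j) := by
    intro U hU
    rw [hT, Finset.mem_filter] at hU
    obtain ⟨-, hcard, hins⟩ := hU
    refine Finset.mem_Icc.2 ⟨?_, ?_⟩
    · rw [Nat.one_le_iff_ne_zero, ← Nat.pos_iff_ne_zero, Finset.card_pos]
      obtain ⟨⟨i, b⟩, hi, hmem⟩ := hins j
      dsimp at hi; subst hi
      exact ⟨b, Finset.mem_filter.2 ⟨Finset.mem_univ _, hmem⟩⟩
    · simpa using Finset.card_le_card (Finset.subset_univ (Spart p m j U))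
  rw [Finset.card_eq_sum_card_fiberwise hfiber]
  refine Finset.sum_congr rfl ?_
  intro i hi
  obtain ⟨hi1, hi2⟩ := Finset.mem_Icc.1 hi
  -- bijection of the fiber with pairs
  have key : (T.filter (fun U => (Spart p m j U).card = i)).card =
      ((Finset.univ : Finset (Finset (Fin (p j)))).filter (fun S => S.card = i)).card *
      ((Finset.univ : Finset (Finset (InsetGround n (j.removeNth p) m))).filter
        (fun V => V.card + i = (n+1) + k ∧
          ∀ i' : Fin n, ∃ x : Σ j' : Fin n, Fin (j.removeNth p j'), x.1 = i' ∧ Sum.inl x ∈ V)).card := by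
    rw [← Finset.card_product]
    refine Finset.card_bij' (fun U _ => (Spart p m j U, Vpart p m j U))
      (fun q _ => q.1.image (inlj p m j) ∪ q.2.image (toBig p m j)) ?_ ?_ ?_ ?_
    · -- forward membership
      intro U hU
      rw [Finset.mem_filter, hT, Finset.mem_filter] at hU
      obtain ⟨⟨-, hcard, hins⟩, hScard⟩ := hU
      rw [Finset.mem_product, Finset.mem_filter, Finset.mem_filter]
      refine ⟨⟨Finset.mem_univ _, hScard⟩, Finset.mem_univ _, ?_, ?_⟩
      · dsimp only
        have hcd := card_decomp (j := j) U
        omega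
      · intro i'
        obtain ⟨⟨i₀, b⟩, hi₀, hmem⟩ := hins (j.succAbove i')
        dsimp at hi₀; subst hi₀
        exact ⟨⟨i', b⟩, rfl, Finset.mem_filter.2 ⟨Finset.mem_univ _, hmem⟩⟩
    · -- backward membership
      intro q hq
      rw [Finset.mem_product, Finset.mem_filter, Finset.mem_filter] at hq
      obtain ⟨⟨-, hS⟩, -, hVc, hVins⟩ := hq
      have hdisj : Disjoint (q.1.image (inlj p m j)) (q.2.image (toBig p m j)) := by
        rw [Finset.disjoint_left]
        rintro x hx hx'
        simp only [Finset.mem_image] at hx hx'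
        obtain ⟨a, -, rfl⟩ := hx
        obtain ⟨y, -, h⟩ := hx'
        exact inlj_ne_toBig a y h.symm
      have hScard : (Spart p m j (q.1.image (inlj p m j) ∪ q.2.image (toBig p m j))) = q.1 := by
        ext a
        simp only [Spart, Finset.mem_filter, Finset.mem_univ, true_and, Finset.mem_union,
          Finset.mem_image]
        constructor
        · rintro (⟨a', ha', h⟩ | ⟨y, hy, h⟩)
          · rwa [← inlj_injective h]
          · exact (inlj_ne_toBig a y h.symm).elim
        · intro ha; exact Or.inl ⟨a, ha, rfl⟩
      rw [Finset.mem_filter, hT, Finset.mem_filter, hScard]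
      refine ⟨⟨Finset.mem_univ _, ?_, ?_⟩, hS⟩
      · rw [Finset.card_union_of_disjoint hdisj,
          Finset.card_image_of_injective _ inlj_injective,
          Finset.card_image_of_injective _ toBig_injective, hS]
        omega
      · intro i₀
        by_cases h : i₀ = j
        · subst h
          have : q.1.Nonempty := by rw [← Finset.card_pos, hS]; omega
          obtain ⟨a, ha⟩ := this
          exact ⟨⟨i₀, a⟩, rfl, Finset.mem_union_left _ (Finset.mem_image_of_mem _ ha)⟩
        · obtain ⟨i', rfl⟩ := Fin.exists_succAbove_eq h
          obtain ⟨⟨i₁, b⟩, hi₁, hmem⟩ := hVins i'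
          dsimp at hi₁; subst hi₁
          exact ⟨⟨j.succAbove i₁, b⟩, rfl,
            Finset.mem_union_right _ (Finset.mem_image_of_mem _ hmem)⟩
    · -- left inverse
      intro U hU
      exact (decomp U).symm
    · -- right inverse
      intro q hq
      have hScard : (Spart p m j (q.1.image (inlj p m j) ∪ q.2.image (toBig p m j))) = q.1 := by
        ext a
        simp only [Spart, Finset.mem_filter, Finset.mem_univ, true_and, Finset.mem_union,
          Finset.mem_image]
        constructor
        · rintro (⟨a', ha', h⟩ | ⟨y, hy, h⟩)
          · rwa [← inlj_injective h]
          · exact (inlj_ne_toBig a y h.symm).elim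
        · intro ha; exact Or.inl ⟨a, ha, rfl⟩
      have hVcard : (Vpart p m j (q.1.image (inlj p m j) ∪ q.2.image (toBig p m j))) = q.2 := by
        ext y
        simp only [Vpart, Finset.mem_filter, Finset.mem_univ, true_and, Finset.mem_union,
          Finset.mem_image]
        constructor
        · rintro (⟨a, ha, h⟩ | ⟨y', hy', h⟩)
          · exact (inlj_ne_toBig a y h).elim
          · rwa [← toBig_injective h]
        · intro hy; exact Or.inr ⟨y, hy, rfl⟩
      rw [hScard, hVcard]
  rw [key]
  congr 1
  · -- count of subsets of card i
    rw [← Finset.powerset_univ, ← Finset.powersetCard_eq_filter,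
      Finset.card_powersetCard, Finset.card_univ, Fintype.card_fin]
  · -- the V count equals Fz
    by_cases hik : i ≤ k + 1
    · have h0 : (0 : ℤ) ≤ (k : ℤ) - i + 1 := by omega
      rw [Fz, if_pos h0, F]
      congr 1
      apply Finset.filter_congr
      intro V _
      have htoNat : ((k : ℤ) - i + 1).toNat = k + 1 - i := by omega
      rw [htoNat]
      constructor
      · rintro ⟨h1, h2⟩; exact ⟨by omega, h2⟩
      · rintro ⟨h1, h2⟩; exact ⟨by omega, h2⟩
    · rw [Fz, if_neg (by omega)]
      rw [Finset.card_eq_zero, Finset.filter_eq_empty_iff]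
      rintro V - ⟨hVc, hVins⟩
      -- V has at least n elements
      choose x hx1 hx2 using hVins
      have hinj : Function.Injective x := by
        intro a b h
        rw [← hx1 a, ← hx1 b, h]
      have : n ≤ V.card := by
        calc n = Fintype.card (Fin n) := (Fintype.card_fin n).symm
        _ = (Finset.univ.image (fun i' => (Sum.inl (x i') : InsetGround n (j.removeNth p) m))).card := by
            rw [Finset.card_image_of_injective _ (fun a b h => hinj (by simpa using h)),
              Finset.card_univ]
        _ ≤ V.card := Finset.card_le_card (by
            intro y hy
            simp only [Finset.mem_image] at hy
            obtain ⟨i', -, rfl⟩ := hy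
            exact hx2 i')
      omega
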